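/- There exists a completely decomposable torsion-free abelian group that is Dedekind-finite but not Bassian-finite. In fact, if (A_i)_{i<ω} are torsion-free rank-1 groups whose types are strictly increasing (for each i there is an injective homomorphism A_i → A_{i+1} but no injective homomorphism A_{i+1} → A_i), then G = ⊕_{i<ω} A_i is Dedekind-finite but not Bassian-finite. -/

import Mathlib

open DirectSum TensorProduct

/-- An abelian group `G` is *Bassian-finite* if there is no injective homomorphism
from `G` into a proper direct summand of `G`. -/
def BassianFinite (G : Type*) [AddCommGroup G] : Prop :=
  ∀ A B : AddSubgroup G, IsCompl A B → B ≠ ⊥ → ∀ φ : G →+ A, ¬ Function.Injective φ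

/-- An abelian group `G` is *Dedekind-finite* if there is no isomorphism from `G`
onto a proper direct summand of `G`. -/
def DedekindFinite (G : Type*) [AddCommGroup G] : Prop :=
  ∀ A B : AddSubgroup G, IsCompl A B → B ≠ ⊥ → IsEmpty (G ≃+ A)

/-- A monoid is torsion-free if no nontrivial elements have finite order
(the definition `AddMonoid.IsTorsionFree` of the older Mathlib, removed since). -/
def AddMonoid.IsTorsionFree (G : Type*) [AddMonoid G] : Prop :=
  ∀ g : G, g ≠ 0 → ¬IsOfFinAddOrder g

lemma one_tmul_ne_zero {M : Type*} [AddCommGroup M] (htf : AddMonoid.IsTorsionFree M)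
    {x : M} (hx : x ≠ 0) : (1 : ℚ) ⊗ₜ[ℤ] x ≠ 0 := by
  have h1 : NoZeroSMulDivisors ℤ M := ⟨fun {n y} h => by
    by_contra hc; push_neg at hc
    exact htf y hc.2 (isOfFinAddOrder_iff_zsmul_eq_zero.mpr ⟨n, hc.1, h⟩)⟩
  have hbc : IsBaseChange ℚ (TensorProduct.mk ℤ ℚ M 1) := TensorProduct.isBaseChange ℤ M ℚ
  have : IsLocalizedModule (nonZeroDivisors ℤ) (TensorProduct.mk ℤ ℚ M 1) :=
    (isLocalizedModule_iff_isBaseChange (nonZeroDivisors ℤ) ℚ _).mpr hbc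
  intro h
  obtain ⟨s, hs⟩ := (IsLocalizedModule.eq_zero_iff (nonZeroDivisors ℤ) (TensorProduct.mk ℤ ℚ M 1)).mp h
  have : (s : ℤ) ≠ 0 := nonZeroDivisors.coe_ne_zero s
  exact hx ((smul_eq_zero_iff_right this).mp hs)

lemma exists_int_rel {M : Type*} [AddCommGroup M] (htf : AddMonoid.IsTorsionFree M)
    (hrk : Module.rank ℚ (ℚ ⊗[ℤ] M) = 1) (x a : M) (ha : a ≠ 0) :
    ∃ m n : ℤ, n ≠ 0 ∧ n • x = m • a := by
  obtain ⟨v₀, hv₀⟩ := (rank_le_one_iff).mp hrk.le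
  obtain ⟨q, hq⟩ := hv₀ ((1:ℚ) ⊗ₜ[ℤ] x)
  obtain ⟨r, hr⟩ := hv₀ ((1:ℚ) ⊗ₜ[ℤ] a)
  have hr0 : r ≠ 0 := by
    rintro rfl
    exact one_tmul_ne_zero htf ha (by rw [← hr, zero_smul])
  -- (r⁻¹ * q) • (1 ⊗ a) = 1 ⊗ x
  set s : ℚ := r⁻¹ * q with hs
  have key : s • ((1:ℚ) ⊗ₜ[ℤ] a) = (1:ℚ) ⊗ₜ[ℤ] x := by
    rw [← hq, ← hr, smul_smul, hs, mul_comm r⁻¹ q, mul_assoc, inv_mul_cancel₀ hr0, mul_one]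
  refine ⟨s.num, (s.den : ℤ), by exact_mod_cast s.den_ne_zero, ?_⟩
  have hden : ((s.den : ℤ) : ℚ) • ((1:ℚ) ⊗ₜ[ℤ] x) = ((s.num : ℚ)) • ((1:ℚ) ⊗ₜ[ℤ] a) := by
    rw [← key, smul_smul]
    norm_num [Rat.mul_den_eq_num]
  have hden' : (1:ℚ) ⊗ₜ[ℤ] ((s.den : ℤ) • x) - (1:ℚ) ⊗ₜ[ℤ] (s.num • a) = 0 := by
    rw [tmul_smul, tmul_smul]
    rw [← Int.cast_smul_eq_zsmul ℚ, ← Int.cast_smul_eq_zsmul ℚ (s.num)]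
    rw [hden, sub_self]
  rw [← tmul_sub] at hden'
  by_contra hne
  have : (s.den : ℤ) • x - s.num • a ≠ 0 := fun h => hne (sub_eq_zero.mp h)
  exact one_tmul_ne_zero htf this hden'

lemma injective_of_ne_zero {M N : Type*} [AddCommGroup M] [AddCommGroup N]
    (htfM : AddMonoid.IsTorsionFree M) (htfN : AddMonoid.IsTorsionFree N)
    (hrk : Module.rank ℚ (ℚ ⊗[ℤ] M) = 1) (φ : M →+ N) (hφ : φ ≠ 0) :
    Function.Injective φ := by
  have hN : NoZeroSMulDivisors ℤ N := ⟨fun {n y} h => by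
    by_contra hc; push_neg at hc
    exact htfN y hc.2 (isOfFinAddOrder_iff_zsmul_eq_zero.mpr ⟨n, hc.1, h⟩)⟩
  have hM : NoZeroSMulDivisors ℤ M := ⟨fun {n y} h => by
    by_contra hc; push_neg at hc
    exact htfM y hc.2 (isOfFinAddOrder_iff_zsmul_eq_zero.mpr ⟨n, hc.1, h⟩)⟩
  obtain ⟨a, haf⟩ : ∃ a, φ a ≠ 0 := by
    by_contra h; push_neg at h; exact hφ (AddMonoidHom.ext fun a => h a)
  have ha : a ≠ 0 := fun h => haf (by rw [h, map_zero])
  rw [injective_iff_map_eq_zero]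
  intro x hx
  obtain ⟨m, n, hn, hrel⟩ := exists_int_rel htfM hrk x a ha
  have : m • φ a = 0 := by
    have := congrArg φ hrel
    rw [map_zsmul, map_zsmul, hx, smul_zero] at this
    exact this.symm
  rcases smul_eq_zero.mp this with hm | h
  · subst hm
    rw [zero_smul] at hrel
    exact (smul_eq_zero_iff_right hn).mp hrel
  · exact absurd h haf

section
variable {A : ℕ → Type*} [∀ i, AddCommGroup (A i)]

lemma exists_chain (hup : ∀ i, ∃ ψ : A i →+ A (i + 1), Function.Injective ψ)
    {k l : ℕ} (h : k ≤ l) : ∃ χ : A k →+ A l, Function.Injective χ := by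
  induction l, h using Nat.le_induction with
  | base => exact ⟨AddMonoidHom.id _, fun _ _ h => h⟩
  | succ l hkl ih =>
    obtain ⟨χ, hχ⟩ := ih
    obtain ⟨ψ, hψ⟩ := hup l
    exact ⟨ψ.comp χ, hψ.comp hχ⟩

lemma hom_eq_zero (htf : ∀ i, AddMonoid.IsTorsionFree (A i))
    (hrk : ∀ i, Module.rank ℚ (ℚ ⊗[ℤ] A i) = 1)
    (hup : ∀ i, ∃ ψ : A i →+ A (i + 1), Function.Injective ψ)
    (hdown : ∀ i, ¬ ∃ ψ : A (i + 1) →+ A i, Function.Injective ψ)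
    {i j : ℕ} (hij : i < j) (φ : A j →+ A i) : φ = 0 := by
  by_contra hφ
  have hinj : Function.Injective φ := injective_of_ne_zero (htf j) (htf i) (hrk j) φ hφ
  obtain ⟨χ, hχ⟩ := exists_chain hup (Nat.succ_le_of_lt hij)
  exact hdown i ⟨φ.comp χ, hinj.comp hχ⟩

-- nonzero components exist
lemma A_pos (hrk : ∀ i, Module.rank ℚ (ℚ ⊗[ℤ] A i) = 1) (i : ℕ) : ∃ a : A i, a ≠ 0 := by
  by_contra h
  push_neg at h
  have : Subsingleton (A i) := ⟨fun a b => by rw [h a, h b]⟩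
  have : Subsingleton (ℚ ⊗[ℤ] A i) := by
    constructor
    intro a b
    have : ∀ v : ℚ ⊗[ℤ] A i, v = 0 := fun v => by
      induction v using TensorProduct.induction_on with
      | zero => rfl
      | tmul q x => rw [Subsingleton.elim x 0, tmul_zero]
      | add x y hx hy => rw [hx, hy, add_zero]
    rw [this a, this b]
  have := hrk i
  rw [rank_subsingleton'] at this
  exact one_ne_zero this.symm

end

section
variable {A : ℕ → Type*} [∀ i, AddCommGroup (A i)]

lemma shift_component (ψ : ∀ i, A i →+ A (i+1)) (x : ⨁ i, A i) (j : ℕ) :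
    (toAddMonoid (fun i => (of A (i+1)).comp (ψ i)) x) (j+1) = ψ j (x j) := by
  have h : ((DirectSum.component ℤ ℕ A (j+1)).toAddMonoidHom.comp
      (toAddMonoid (fun i => (of A (i+1)).comp (ψ i)))) =
      (ψ j).comp (DirectSum.component ℤ ℕ A j).toAddMonoidHom := by
    apply DirectSum.addHom_ext
    intro i a
    simp only [AddMonoidHom.comp_apply, toAddMonoid_of, LinearMap.toAddMonoidHom_coe]
    rcases eq_or_ne i j with rfl | hne
    · show (of A (i+1) (ψ i a)) (i+1) = ψ i ((of A i a) i)
      rw [of_eq_same, of_eq_same]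
    · show (of A (i+1) (ψ i a)) (j+1) = ψ j ((of A i a) j)
      rw [of_eq_of_ne _ _ _ (by omega), of_eq_of_ne _ _ _ hne.symm, map_zero]
  exact DFunLike.congr_fun h x

lemma shift_component_zero (ψ : ∀ i, A i →+ A (i+1)) (x : ⨁ i, A i) :
    (toAddMonoid (fun i => (of A (i+1)).comp (ψ i)) x) 0 = 0 := by
  have h : ((DirectSum.component ℤ ℕ A 0).toAddMonoidHom.comp
      (toAddMonoid (fun i => (of A (i+1)).comp (ψ i)))) = 0 := by
    apply DirectSum.addHom_ext
    intro i a
    simp only [AddMonoidHom.comp_apply, toAddMonoid_of, LinearMap.toAddMonoidHom_coe,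
      AddMonoidHom.zero_apply]
    show (of A (i+1) (ψ i a)) 0 = 0
    rw [of_eq_of_ne _ _ _ (by omega)]
  exact DFunLike.congr_fun h x

lemma not_bassian
    (hrk : ∀ i, Module.rank ℚ (ℚ ⊗[ℤ] A i) = 1)
    (hup : ∀ i, ∃ ψ : A i →+ A (i + 1), Function.Injective ψ)
    (hA0 : ∃ a : A 0, a ≠ 0) :
    ¬ (∀ Asub B : AddSubgroup (⨁ i, A i), IsCompl Asub B → B ≠ ⊥ →
        ∀ φ : (⨁ i, A i) →+ Asub, ¬ Function.Injective φ) := by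
  intro H
  choose ψ hψ using hup
  set G := ⨁ i, A i
  set B₀ : AddSubgroup G := (of A 0).range with hB₀
  set A₀ : AddSubgroup G := (DirectSum.component ℤ ℕ A 0).toAddMonoidHom.ker with hA₀
  have hmem : ∀ x : G, x ∈ A₀ ↔ x 0 = 0 := fun x => Iff.rfl
  have hcompl : IsCompl A₀ B₀ := by
    constructor
    · rw [AddSubgroup.disjoint_def]
      rintro x hx ⟨a, rfl⟩
      have : a = 0 := by
        have := (hmem _).mp hx
        rwa [of_eq_same] at this
      rw [this, map_zero]
    · rw [codisjoint_iff_le_sup]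
      intro x _
      rw [← sub_add_cancel x (of A 0 (x 0))]
      refine AddSubgroup.add_mem_sup ?_ ⟨x 0, rfl⟩
      rw [hmem]
      show (x - of A 0 (x 0)) 0 = 0
      rw [DFinsupp.sub_apply]
      rw [of_eq_same]
      exact sub_self _
  have hBne : B₀ ≠ ⊥ := by
    obtain ⟨a, ha⟩ := hA0
    intro hbot
    have : of A 0 a ∈ B₀ := ⟨a, rfl⟩
    rw [hbot, AddSubgroup.mem_bot] at this
    apply ha
    rw [← of_eq_same (β := A) 0 a, this]
    rfl
  set sh : G →+ G := toAddMonoid (fun i => (of A (i+1)).comp (ψ i)) with hsh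
  have hshA₀ : ∀ x, sh x ∈ A₀ := fun x => (hmem _).mpr (shift_component_zero ψ x)
  set φ : G →+ A₀ := sh.codRestrict A₀ hshA₀ with hφ
  refine H A₀ B₀ hcompl hBne φ ?_
  rw [injective_iff_map_eq_zero]
  intro x hx
  have hx' : sh x = 0 := congrArg Subtype.val hx
  refine DFinsupp.ext fun j => ?_
  have hj := shift_component ψ x j
  rw [hx'] at hj
  have h0 : ψ j (x j) = 0 := by rw [← hj]; rfl
  show x j = 0
  exact hψ j (by rw [h0, map_zero])
end

section
variable (A : ℕ → Type*) [∀ i, AddCommGroup (A i)]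

/-- component map tensored with ℚ -/
noncomputable def CC (i : ℕ) : (ℚ ⊗[ℤ] ⨁ i, A i) →ₗ[ℚ] ℚ ⊗[ℤ] A i :=
  LinearMap.baseChange ℚ (DirectSum.component ℤ ℕ A i)

/-- inclusion map tensored with ℚ -/
noncomputable def EE (j : ℕ) : (ℚ ⊗[ℤ] A j) →ₗ[ℚ] ℚ ⊗[ℤ] ⨁ i, A i :=
  LinearMap.baseChange ℚ (DirectSum.lof ℤ ℕ A j)

variable {A}

lemma CC_EE_same (i : ℕ) : CC A i ∘ₗ EE A i = LinearMap.id := by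
  rw [CC, EE, ← LinearMap.baseChange_comp, ← LinearMap.baseChange_id (A := ℚ)]
  congr 1
  ext a
  simp

lemma CC_EE_ne {i j : ℕ} (h : j ≠ i) : CC A i ∘ₗ EE A j = 0 := by
  rw [CC, EE, ← LinearMap.baseChange_comp, ← LinearMap.baseChange_zero (A := ℚ)]
  congr 1
  ext a
  simp [DirectSum.component.of, h]

lemma mem_iSup_range_EE (v : ℚ ⊗[ℤ] ⨁ i, A i) :
    v ∈ ⨆ j, LinearMap.range (EE A j) := by
  induction v using TensorProduct.induction_on with
  | zero => exact zero_mem _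
  | add x y hx hy => exact add_mem hx hy
  | tmul q x =>
    induction x using DirectSum.induction_on with
    | zero => rw [tmul_zero]; exact zero_mem _
    | add x y hx hy => rw [tmul_add]; exact add_mem hx hy
    | of i a =>
      refine Submodule.mem_iSup_of_mem i ⟨q ⊗ₜ[ℤ] a, ?_⟩
      rw [EE, LinearMap.baseChange_tmul, lof_eq_of]

lemma tri_baseChange (hz : ∀ ⦃i j : ℕ⦄, i < j → ∀ φ : A j →+ A i, φ = 0)
    (h : (⨁ i, A i) →ₗ[ℤ] ⨁ i, A i) {i j : ℕ} (hij : i < j) :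
    CC A i ∘ₗ LinearMap.baseChange ℚ h ∘ₗ EE A j = 0 := by
  rw [CC, EE, ← LinearMap.baseChange_comp, ← LinearMap.baseChange_comp,
    ← LinearMap.baseChange_zero (A := ℚ)]
  congr 1
  have := hz hij (DirectSum.component ℤ ℕ A i ∘ₗ h ∘ₗ DirectSum.lof ℤ ℕ A j).toAddMonoidHom
  ext a
  exact DFunLike.congr_fun this a

lemma key_T (hz : ∀ ⦃i j : ℕ⦄, i < j → ∀ φ : A j →+ A i, φ = 0)
    (h : (⨁ i, A i) →ₗ[ℤ] ⨁ i, A i) {N : ℕ} {v : ℚ ⊗[ℤ] ⨁ i, A i}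
    (hv : ∀ k < N, CC A k v = 0) :
    ∀ k < N, CC A k (LinearMap.baseChange ℚ h v) = 0 := by
  intro k hk
  set H := LinearMap.baseChange ℚ h with hH
  have key : CC A k ∘ₗ H =
      ∑ j ∈ Finset.range (k+1), ((CC A k ∘ₗ H ∘ₗ EE A j) ∘ₗ CC A j) := by
    apply LinearMap.ext
    intro v'
    have hv' := mem_iSup_range_EE v'
    induction hv' using Submodule.iSup_induction'  with
    | mem j z hz' =>
      obtain ⟨w, rfl⟩ := hz'
      simp only [LinearMap.comp_apply, LinearMap.sum_apply]
      rcases le_or_gt j k with hjk | hjk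
      · rw [Finset.sum_eq_single j]
        · have := DFunLike.congr_fun (CC_EE_same (A := A) j) w
          simp only [LinearMap.comp_apply, LinearMap.id_apply] at this
          rw [this]
        · intro j' _ hj'
          have := DFunLike.congr_fun (CC_EE_ne (A := A) (Ne.symm hj')) w
          simp only [LinearMap.comp_apply, LinearMap.zero_apply] at this
          rw [this, map_zero, map_zero, map_zero]
        · intro hj
          exact absurd (Finset.mem_range.mpr (by omega)) (fun c => hj c)
      · have hL := DFunLike.congr_fun (tri_baseChange hz h hjk) w
        simp only [LinearMap.comp_apply, LinearMap.zero_apply] at hL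
        rw [hL]
        symm
        apply Finset.sum_eq_zero
        intro j' hj'
        have hne : j ≠ j' := by
          rw [Finset.mem_range] at hj'; omega
        have := DFunLike.congr_fun (CC_EE_ne (A := A) hne) w
        simp only [LinearMap.comp_apply, LinearMap.zero_apply] at this
        rw [this, map_zero, map_zero, map_zero]
    | zero => simp
    | add x y _ _ hx hy =>
      simp only [map_add, hx, hy]
  have := DFunLike.congr_fun key v
  simp only [LinearMap.comp_apply, LinearMap.sum_apply] at this
  rw [this]
  apply Finset.sum_eq_zero
  intro j hj
  rw [Finset.mem_range] at hj
  rw [hv j (by omega), map_zero, map_zero, map_zero]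


set_option maxHeartbeats 2000000 in
lemma dedekind_aux
    (htf : ∀ i, AddMonoid.IsTorsionFree (A i))
    (hz : ∀ ⦃i j : ℕ⦄, i < j → ∀ φ : A j →+ A i, φ = 0)
    (hrk : ∀ i, Module.rank ℚ (ℚ ⊗[ℤ] A i) = 1) :
    ∀ Asub B : AddSubgroup (⨁ i, A i), IsCompl Asub B → B ≠ ⊥ →
      IsEmpty ((⨁ i, A i) ≃+ Asub) := by
  intro Asub B hc hB
  constructor
  intro θ
  obtain ⟨b, hbB, hb⟩ : ∃ b ∈ B, b ≠ 0 := by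
    by_contra hcon; push_neg at hcon
    exact hB ((AddSubgroup.eq_bot_iff_forall _).mpr hcon)
  obtain ⟨i₀, hbi⟩ : ∃ i₀, b i₀ ≠ 0 := by
    by_contra hcon; push_neg at hcon
    exact hb (DFinsupp.ext hcon)
  set N := i₀ + 1 with hN
  set A' : Submodule ℤ (⨁ i, A i) := AddSubgroup.toIntSubmodule Asub with hA'
  set B' : Submodule ℤ (⨁ i, A i) := AddSubgroup.toIntSubmodule B with hB'
  have hc' : IsCompl A' B' := AddSubgroup.toIntSubmodule.isCompl hc
  have θ' : (⨁ i, A i) ≃+ A' := θ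
  set pA := Submodule.projectionOnto A' B' hc' with hpA
  set pB := Submodule.projectionOnto B' A' hc'.symm with hpB
  set f : (⨁ i, A i) →ₗ[ℤ] (⨁ i, A i) := A'.subtype ∘ₗ θ'.toAddMonoidHom.toIntLinearMap with hf
  set g : (⨁ i, A i) →ₗ[ℤ] (⨁ i, A i) := θ'.symm.toAddMonoidHom.toIntLinearMap ∘ₗ pA with hg
  set d : (⨁ i, A i) →ₗ[ℤ] (⨁ i, A i) := B'.subtype ∘ₗ pB with hd
  have hgf : ∀ x, g (f x) = x := by
    intro x
    show θ'.symm (pA ((θ' x : (⨁ i, A i)))) = x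
    rw [Submodule.projectionOnto_apply_left hc' (θ' x), AddEquiv.symm_apply_apply]
  have hdf : ∀ x, d (f x) = 0 := by
    intro x
    show ((pB ((θ' x : (⨁ i, A i)))) : (⨁ i, A i)) = 0
    rw [Submodule.projectionOnto_apply_right hc'.symm (θ' x)]
    rfl
  have hdb : d b = b := by
    show ((pB b) : (⨁ i, A i)) = b
    rw [show b = ((⟨b, hbB⟩ : B') : (⨁ i, A i)) from rfl,
      Submodule.projectionOnto_apply_left hc'.symm]
  set F := LinearMap.baseChange ℚ f with hF
  set Gm := LinearMap.baseChange ℚ g with hGm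
  set D := LinearMap.baseChange ℚ d with hD
  have hGmF : Gm ∘ₗ F = LinearMap.id := by
    rw [hGm, hF, ← LinearMap.baseChange_comp, show g ∘ₗ f = LinearMap.id from LinearMap.ext hgf,
      LinearMap.baseChange_id]
  have hDF : D ∘ₗ F = 0 := by
    rw [hD, hF, ← LinearMap.baseChange_comp, show d ∘ₗ f = 0 from LinearMap.ext hdf,
      LinearMap.baseChange_zero]
  set P : (ℚ ⊗[ℤ] ⨁ i, A i) →ₗ[ℚ] (ℚ ⊗[ℤ] ⨁ i, A i) :=
    ∑ i ∈ Finset.range N, EE A i ∘ₗ CC A i with hP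
  have hPapp : ∀ v, P v = ∑ i ∈ Finset.range N, EE A i (CC A i v) := by
    intro v
    rw [hP, LinearMap.sum_apply]
    exact Finset.sum_congr rfl fun i _ => rfl
  have hCP : ∀ k < N, ∀ v, CC A k (P v) = CC A k v := by
    intro k hk v
    rw [hPapp, map_sum, Finset.sum_eq_single k]
    · exact DFunLike.congr_fun (CC_EE_same (A := A) k) (CC A k v)
    · intro j _ hj
      have := DFunLike.congr_fun (CC_EE_ne (A := A) hj) (CC A j v)
      simp only [LinearMap.comp_apply, LinearMap.zero_apply] at this
      exact this
    · intro hk'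
      exact absurd (Finset.mem_range.mpr hk) hk'
  have hPker : ∀ v, P v = 0 → ∀ k < N, CC A k v = 0 := by
    intro v h k hk
    rw [← hCP k hk v, h, map_zero]
  have hPidem : ∀ v, P (P v) = P v := by
    intro v
    calc P (P v) = ∑ i ∈ Finset.range N, EE A i (CC A i (P v)) := hPapp (P v)
      _ = ∑ i ∈ Finset.range N, EE A i (CC A i v) :=
          Finset.sum_congr rfl fun i hi => by rw [hCP i (Finset.mem_range.mp hi)]
      _ = P v := (hPapp v).symm
  haveI hfinVi : ∀ i, FiniteDimensional ℚ (ℚ ⊗[ℤ] A i) :=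
    fun i => Module.finite_of_rank_eq_one (hrk i)
  set U := LinearMap.range P with hU
  have hUfin : FiniteDimensional ℚ U := by
    set S : Submodule ℚ (ℚ ⊗[ℤ] ⨁ i, A i) :=
      Finset.sup (Finset.range N) (fun i => LinearMap.range (EE A i)) with hS
    have hSfin : FiniteDimensional ℚ S := by
      apply Finset.sup_induction (p := fun s : Submodule ℚ (ℚ ⊗[ℤ] ⨁ i, A i) => FiniteDimensional ℚ s)
      · infer_instance
      · intro a ha b hb
        haveI := ha; haveI := hb
        exact Submodule.finiteDimensional_sup a b
      · intro i _
        infer_instance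
    have hUS : U ≤ S := by
      rintro _ ⟨v, rfl⟩
      rw [hPapp v]
      exact Submodule.sum_mem _ fun i hi =>
        (Finset.le_sup (f := fun i => LinearMap.range (EE A i)) hi) ⟨CC A i v, rfl⟩
    exact Submodule.finiteDimensional_of_le hUS
  set F' : U →ₗ[ℚ] U := (P ∘ₗ F).restrict (fun x _ => ⟨F x, rfl⟩) with hF'
  set G' : U →ₗ[ℚ] U := (P ∘ₗ Gm).restrict (fun x _ => ⟨Gm x, rfl⟩) with hG'
  have hleft : ∀ u : U, G' (F' u) = u := by
    intro u
    apply Subtype.ext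
    show P (Gm (P (F (u : ℚ ⊗[ℤ] ⨁ i, A i)))) = (u : ℚ ⊗[ℤ] ⨁ i, A i)
    set v := F (u : ℚ ⊗[ℤ] ⨁ i, A i) with hv
    have hw : ∀ k < N, CC A k (v - P v) = 0 := by
      intro k hk
      rw [map_sub, hCP k hk, sub_self]
    have hGw : ∀ k < N, CC A k (Gm (v - P v)) = 0 := key_T hz g hw
    have h1 : P (Gm (v - P v)) = 0 := by
      rw [hPapp]
      exact Finset.sum_eq_zero fun k hk => by
        rw [hGw k (Finset.mem_range.mp hk), map_zero]
    have h2 : Gm v = (u : ℚ ⊗[ℤ] ⨁ i, A i) := by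
      have := DFunLike.congr_fun hGmF (u : ℚ ⊗[ℤ] ⨁ i, A i)
      simpa using this
    have h3 : Gm (P v) = Gm v - Gm (v - P v) := by rw [map_sub, sub_sub_cancel]
    have h4 : P (u : ℚ ⊗[ℤ] ⨁ i, A i) = (u : ℚ ⊗[ℤ] ⨁ i, A i) := by
      obtain ⟨v₀, hv₀⟩ := u.2
      rw [← hv₀, hPidem]
    rw [h3, map_sub, h1, sub_zero, h2, h4]
  have hinj : Function.Injective F' := Function.LeftInverse.injective hleft
  have hsurj : Function.Surjective F' := LinearMap.injective_iff_surjective.mp hinj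
  obtain ⟨u, hu⟩ := hsurj ⟨P ((1:ℚ) ⊗ₜ[ℤ] b), ⟨(1:ℚ) ⊗ₜ[ℤ] b, rfl⟩⟩
  have hu' : P (F (u : ℚ ⊗[ℤ] ⨁ i, A i)) = P ((1:ℚ) ⊗ₜ[ℤ] b) := congrArg Subtype.val hu
  set w := (1:ℚ) ⊗ₜ[ℤ] b - F (u : ℚ ⊗[ℤ] ⨁ i, A i) with hw
  have hPw : P w = 0 := by rw [hw, map_sub, hu', sub_self]
  have hwk : ∀ k < N, CC A k w = 0 := hPker w hPw
  have hDwk : ∀ k < N, CC A k (D w) = 0 := key_T hz d hwk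
  have hDb : D ((1:ℚ) ⊗ₜ[ℤ] b) = (1:ℚ) ⊗ₜ[ℤ] b := by
    rw [hD, LinearMap.baseChange_tmul, hdb]
  have hDFu : D (F (u : ℚ ⊗[ℤ] ⨁ i, A i)) = 0 := by
    have := DFunLike.congr_fun hDF (u : ℚ ⊗[ℤ] ⨁ i, A i)
    simpa using this
  have hDw : D w = (1:ℚ) ⊗ₜ[ℤ] b := by
    rw [hw, map_sub, hDb, hDFu, sub_zero]
  have hfinal : CC A i₀ ((1:ℚ) ⊗ₜ[ℤ] b) = 0 := by
    rw [← hDw]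
    exact hDwk i₀ (by omega)
  have : CC A i₀ ((1:ℚ) ⊗ₜ[ℤ] b) = (1:ℚ) ⊗ₜ[ℤ] (b i₀) := by
    rw [CC, LinearMap.baseChange_tmul]
    rfl
  rw [this] at hfinal
  exact one_tmul_ne_zero (htf i₀) hbi hfinal

end

/-- If `(A i)_{i < ω}` are torsion-free rank-1 abelian groups with strictly increasing
types (for each `i` there is an injective homomorphism `A i → A (i+1)` but no injective
homomorphism `A (i+1) → A i`), then `G = ⨁ i, A i` is a completely decomposable
torsion-free abelian group that is Dedekind-finite but not Bassian-finite. -/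
theorem dedekindFinite_not_bassianFinite_of_strictly_ascending_types
    (A : ℕ → Type*) [∀ i, AddCommGroup (A i)]
    (htf : ∀ i, AddMonoid.IsTorsionFree (A i))
    (hrk : ∀ i, Module.rank ℚ (ℚ ⊗[ℤ] A i) = 1)
    (hup : ∀ i, ∃ ψ : A i →+ A (i + 1), Function.Injective ψ)
    (hdown : ∀ i, ¬ ∃ ψ : A (i + 1) →+ A i, Function.Injective ψ) :
    DedekindFinite (⨁ i, A i) ∧ ¬ BassianFinite (⨁ i, A i) := by
  constructor
  · exact fun Asub B hc hB =>
      dedekind_aux htf (fun i j hij φ => hom_eq_zero htf hrk hup hdown hij φ) hrk Asub B hc hB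
  · exact fun H => not_bassian hrk hup (A_pos hrk 0) H
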